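/- arXiv:2410.05434 — 2 statements merged into one kernel-verified Lean document; each statement's English description precedes it below -/
import Mathlib

section
/- Let 𝒜 be a nonempty finite action type, S a type of privileged states, Hst a type of histories, and T a positive natural number. Let π : Hst → PMF 𝒜 be a learner policy, π^E : S → PMF 𝒜 a privileged expert policy, π⋆ : Hst → PMF 𝒜 a comparator policy, and for each t ∈ {1,…,T} let μ_t : PMF (S × Hst) be the state–history distribution induced by π at time t. Let A : S × 𝒜 → ℝ satisfy |A(s,a)| ≤ H_E for all s, a (H_E ≥ 0 the recoverability coefficient), and let J, J^E ∈ ℝ. Assume: (i) the performance-difference identity J^E − J = Σ_{t=1}^{T} E_{(s,h)∼μ_t} [ Σ_{a∈𝒜} A(s,a) · (π^E(s)(a) − π(h)(a)) ]; (ii) the DAgger guarantee (1/T) Σ_{t=1}^{T} E_{(s,h)∼μ_t} ‖π(h) − π^E(s)‖₁ ≤ (1/T) Σ_{t=1}^{T} E_{(s,h)∼μ_t} ‖π⋆(h) − π^E(s)‖₁ + γ with γ ≥ 0; and (iii) the realizability bound (1/T) Σ_{t=1}^{T} E_{(s,h)∼μ_t} ‖π⋆(h) − π^E(s)‖₁ ≤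 ε with ε ≥ 0. Then (1/T)·J ≥ (1/T)·J^E − H_E·(ε + γ). -/
open scoped BigOperators

/-- L1 distance between two PMFs on a finite type. -/
noncomputable def l1Dist {𝒜 : Type*} [Fintype 𝒜] (p q : PMF 𝒜) : ℝ :=
  ∑ a, |(p a).toReal - (q a).toReal|

/-- Expectation of a real-valued function under a PMF. -/
noncomputable def expVal {X : Type*} (μ : PMF X) (f : X → ℝ) : ℝ :=
  ∑' x, (μ x).toReal * f x

lemma pmf_toReal_summable {X : Type*} (μ : PMF X) :
    Summable (fun x => (μ x).toReal) :=
  ENNReal.summable_toReal (by simp [μ.tsum_coe])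

lemma pmf_sum_toReal_le_one {𝒜 : Type*} [Fintype 𝒜] (r : PMF 𝒜) :
    ∑ a, (r a).toReal ≤ 1 := by
  have h1 : ∑' a, (r a).toReal = 1 := by
    rw [← ENNReal.tsum_toReal_eq (fun a => PMF.apply_ne_top r a), r.tsum_coe,
      ENNReal.toReal_one]
  calc ∑ a, (r a).toReal ≤ ∑' a, (r a).toReal :=
        Summable.sum_le_tsum _ (fun a _ => ENNReal.toReal_nonneg) (pmf_toReal_summable r)
    _ = 1 := h1

lemma l1Dist_le_two {𝒜 : Type*} [Fintype 𝒜] (p q : PMF 𝒜) : l1Dist p q ≤ 2 := by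
  have : l1Dist p q ≤ ∑ a, ((p a).toReal + (q a).toReal) := by
    apply Finset.sum_le_sum
    intro a _
    calc |(p a).toReal - (q a).toReal| ≤ |(p a).toReal| + |(q a).toReal| :=
          abs_sub _ _
      _ = (p a).toReal + (q a).toReal := by
          rw [abs_of_nonneg ENNReal.toReal_nonneg, abs_of_nonneg ENNReal.toReal_nonneg]
  rw [Finset.sum_add_distrib] at this
  have hp := pmf_sum_toReal_le_one p
  have hq := pmf_sum_toReal_le_one q
  linarith

lemma expVal_summable {X : Type*} (μ : PMF X) (f : X → ℝ) (C : ℝ)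
    (hC : ∀ x, |f x| ≤ C) :
    Summable (fun x => (μ x).toReal * f x) := by
  apply Summable.of_norm_bounded (g := fun x => (μ x).toReal * C)
    ((pmf_toReal_summable μ).mul_right C)
  intro x
  rw [norm_mul, Real.norm_eq_abs, Real.norm_eq_abs, abs_of_nonneg ENNReal.toReal_nonneg]
  exact mul_le_mul_of_nonneg_left (hC x) ENNReal.toReal_nonneg

lemma expVal_mono {X : Type*} (μ : PMF X) (f g : X → ℝ) (C : ℝ)
    (hf : ∀ x, |f x| ≤ C) (hg : ∀ x, |g x| ≤ C) (h : ∀ x, f x ≤ g x) :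
    expVal μ f ≤ expVal μ g :=
  Summable.tsum_le_tsum
    (fun x => mul_le_mul_of_nonneg_left (h x) ENNReal.toReal_nonneg)
    (expVal_summable μ f C hf) (expVal_summable μ g C hg)

lemma expVal_const_mul {X : Type*} (μ : PMF X) (f : X → ℝ) (c : ℝ) :
    expVal μ (fun x => c * f x) = c * expVal μ f := by
  unfold expVal
  rw [← tsum_mul_left]
  congr 1; ext x; ring

/-- Theorem 1 (LEAP with privileged expert): given the performance-difference
identity, the DAgger no-regret guarantee, and the realizability bound, the
time-average performance of the learner is bounded below by that of the
privileged expert minus `H_E * (ε + γ)`. -/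
theorem leap_privileged_expert
    {𝒜 S Hst : Type*} [Fintype 𝒜] [Nonempty 𝒜]
    (T : ℕ) (hT : 0 < T)
    (π : Hst → PMF 𝒜) (πE : S → PMF 𝒜) (πStar : Hst → PMF 𝒜)
    (μ : ℕ → PMF (S × Hst))
    (A : S × 𝒜 → ℝ) (HE : ℝ) (hHE : 0 ≤ HE)
    (hA : ∀ s a, |A (s, a)| ≤ HE)
    (J JE γ ε : ℝ) (hγ : 0 ≤ γ) (hε : 0 ≤ ε)
    (hPD : JE - J = ∑ t ∈ Finset.Icc 1 T,
        expVal (μ t) (fun x => ∑ a, A (x.1, a) * ((πE x.1 a).toReal - (π x.2 a).toReal)))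
    (hDag : (1 / (T : ℝ)) * ∑ t ∈ Finset.Icc 1 T,
          expVal (μ t) (fun x => l1Dist (π x.2) (πE x.1))
        ≤ (1 / (T : ℝ)) * ∑ t ∈ Finset.Icc 1 T,
          expVal (μ t) (fun x => l1Dist (πStar x.2) (πE x.1)) + γ)
    (hReal : (1 / (T : ℝ)) * ∑ t ∈ Finset.Icc 1 T,
          expVal (μ t) (fun x => l1Dist (πStar x.2) (πE x.1)) ≤ ε) :
    (1 / (T : ℝ)) * J ≥ (1 / (T : ℝ)) * JE - HE * (ε + γ) := by
  have hTpos : (0 : ℝ) < T := by exact_mod_cast hT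
  -- pointwise bound on the advantage sum
  have hpt : ∀ x : S × Hst,
      (∑ a, A (x.1, a) * ((πE x.1 a).toReal - (π x.2 a).toReal))
        ≤ HE * l1Dist (π x.2) (πE x.1) := by
    intro x
    unfold l1Dist
    rw [Finset.mul_sum]
    apply Finset.sum_le_sum
    intro a _
    calc A (x.1, a) * ((πE x.1 a).toReal - (π x.2 a).toReal)
        ≤ |A (x.1, a) * ((πE x.1 a).toReal - (π x.2 a).toReal)| := le_abs_self _
      _ = |A (x.1, a)| * |(π x.2 a).toReal - (πE x.1 a).toReal| := by
          rw [abs_mul, abs_sub_comm]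
      _ ≤ HE * |(π x.2 a).toReal - (πE x.1 a).toReal| :=
          mul_le_mul_of_nonneg_right (hA _ _) (abs_nonneg _)
  -- uniform absolute bounds
  have hfbd : ∀ x : S × Hst,
      |∑ a, A (x.1, a) * ((πE x.1 a).toReal - (π x.2 a).toReal)| ≤ 2 * HE := by
    intro x
    calc |∑ a, A (x.1, a) * ((πE x.1 a).toReal - (π x.2 a).toReal)|
        ≤ ∑ a, |A (x.1, a) * ((πE x.1 a).toReal - (π x.2 a).toReal)| :=
          Finset.abs_sum_le_sum_abs _ _
      _ ≤ ∑ a, HE * |(πE x.1 a).toReal - (π x.2 a).toReal| := by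
          apply Finset.sum_le_sum
          intro a _
          rw [abs_mul]
          exact mul_le_mul_of_nonneg_right (hA _ _) (abs_nonneg _)
      _ = HE * l1Dist (πE x.1) (π x.2) := by rw [l1Dist, Finset.mul_sum]
      _ ≤ HE * 2 := mul_le_mul_of_nonneg_left (l1Dist_le_two _ _) hHE
      _ = 2 * HE := by ring
  have hgbd : ∀ x : S × Hst, |HE * l1Dist (π x.2) (πE x.1)| ≤ 2 * HE := by
    intro x
    have h0 : 0 ≤ l1Dist (π x.2) (πE x.1) :=
      Finset.sum_nonneg fun a _ => abs_nonneg _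
    rw [abs_of_nonneg (mul_nonneg hHE h0)]
    calc HE * l1Dist (π x.2) (πE x.1) ≤ HE * 2 :=
          mul_le_mul_of_nonneg_left (l1Dist_le_two _ _) hHE
      _ = 2 * HE := by ring
  -- termwise expectation bound
  have hterm : ∀ t,
      expVal (μ t) (fun x => ∑ a, A (x.1, a) * ((πE x.1 a).toReal - (π x.2 a).toReal))
        ≤ HE * expVal (μ t) (fun x => l1Dist (π x.2) (πE x.1)) := by
    intro t
    have := expVal_mono (μ t)
      (fun x => ∑ a, A (x.1, a) * ((πE x.1 a).toReal - (π x.2 a).toReal))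
      (fun x => HE * l1Dist (π x.2) (πE x.1)) (2 * HE) hfbd hgbd hpt
    rwa [expVal_const_mul] at this
  -- sum over t
  set L : ℝ := ∑ t ∈ Finset.Icc 1 T, expVal (μ t) (fun x => l1Dist (π x.2) (πE x.1))
  have hsum : JE - J ≤ HE * L := by
    rw [hPD]
    calc ∑ t ∈ Finset.Icc 1 T,
          expVal (μ t) (fun x => ∑ a, A (x.1, a) * ((πE x.1 a).toReal - (π x.2 a).toReal))
        ≤ ∑ t ∈ Finset.Icc 1 T, HE * expVal (μ t) (fun x => l1Dist (π x.2) (πE x.1)) :=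
          Finset.sum_le_sum fun t _ => hterm t
      _ = HE * L := (Finset.mul_sum _ _ _).symm
  have hL : (1 / (T : ℝ)) * L ≤ ε + γ := le_trans hDag (by linarith)
  have hfinal : (1 / (T : ℝ)) * (JE - J) ≤ HE * (ε + γ) := by
    have h1 : (1 / (T : ℝ)) * (JE - J) ≤ (1 / (T : ℝ)) * (HE * L) :=
      mul_le_mul_of_nonneg_left hsum (by positivity)
    have h2 : (1 / (T : ℝ)) * (HE * L) = HE * ((1 / (T : ℝ)) * L) := by ring
    calc (1 / (T : ℝ)) * (JE - J) ≤ HE * ((1 / (T : ℝ)) * L) := by rw [← h2]; exact h1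
      _ ≤ HE * (ε + γ) := mul_le_mul_of_nonneg_left hL hHE
  nlinarith [hfinal]
end

section
/- Let 𝒜 be a nonempty finite type and let p, q be probability mass functions on 𝒜 with full support (p(a) > 0 and q(a) > 0 for all a). Fix λ ≥ 0 and define Z = Σ_{a∈𝒜} p(a)^{1/(1+λ)} · q(a)^{λ/(1+λ)} and r⋆(a) = p(a)^{1/(1+λ)} · q(a)^{λ/(1+λ)} / Z. Then r⋆ is a probability mass function on 𝒜, and for every probability mass function r on 𝒜, KL(r‖p) + λ·KL(r‖q) ≥ KL(r⋆‖p) + λ·KL(r⋆‖q), with equality if and only if r = r⋆. In particular, r⋆ is the unique minimizer over the probability simplex of the Lagrangian of the constrained privileged-expert problem: minimize KL(r‖p) subject to KL(r‖q) ≤ δ, whose Lagrangian with multiplier λ is KL(r‖p) + λ·(KL(r‖q) − δ). -/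
open scoped BigOperators

/-- KL divergence of a real-valued mass function `f` relative to a PMF `p`
(with the convention `0 * log 0 = 0`). -/
noncomputable def klFun {𝒜 : Type*} [Fintype 𝒜] (f : 𝒜 → ℝ) (p : PMF 𝒜) : ℝ :=
  ∑ a, f a * Real.log (f a / (p a).toReal)

/-- Pointwise Gibbs term is nonnegative. -/
lemma gibbs_term_nonneg {r s : ℝ} (hr : 0 ≤ r) (hs : 0 < s) :
    0 ≤ s - r + r * Real.log (r / s) := by
  rcases eq_or_lt_of_le hr with h | h
  · simp [← h, hs.le]
  · have hx : 0 < s / r := div_pos hs h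
    have := Real.log_le_sub_one_of_pos hx
    have hlog : Real.log (r / s) = - Real.log (s / r) := by
      rw [← Real.log_inv, inv_div]
    rw [hlog]
    have h2 : r * Real.log (s / r) ≤ r * (s / r - 1) := by
      exact mul_le_mul_of_nonneg_left this h.le
    have h3 : r * (s / r - 1) = s - r := by field_simp
    nlinarith [h2, h3]

lemma gibbs_term_eq_zero {r s : ℝ} (hr : 0 ≤ r) (hs : 0 < s)
    (h : s - r + r * Real.log (r / s) = 0) : r = s := by
  rcases eq_or_lt_of_le hr with h0 | h0
  · exfalso; rw [← h0] at h; simp at h; linarith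
  · by_contra hne
    have hx : 0 < s / r := div_pos hs h0
    have hx1 : s / r ≠ 1 := by
      intro h1
      exact hne (by field_simp at h1; linarith)
    have hlt := Real.log_lt_sub_one_of_pos hx hx1
    have hlog : Real.log (r / s) = - Real.log (s / r) := by
      rw [← Real.log_inv, inv_div]
    rw [hlog] at h
    have h2 : r * Real.log (s / r) < r * (s / r - 1) :=
      mul_lt_mul_of_pos_left hlt h0
    have h3 : r * (s / r - 1) = s - r := by field_simp
    nlinarith

/-- Gibbs' inequality on a finite type, with equality condition. -/
lemma gibbs_ineq {𝒜 : Type*} [Fintype 𝒜] (r s : 𝒜 → ℝ)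
    (hr : ∀ a, 0 ≤ r a) (hs : ∀ a, 0 < s a)
    (hr1 : ∑ a, r a = 1) (hs1 : ∑ a, s a = 1) :
    0 ≤ ∑ a, r a * Real.log (r a / s a) ∧
      ((∑ a, r a * Real.log (r a / s a)) = 0 ↔ ∀ a, r a = s a) := by
  have hsum : ∑ a, (s a - r a + r a * Real.log (r a / s a))
      = ∑ a, r a * Real.log (r a / s a) := by
    rw [Finset.sum_add_distrib, Finset.sum_sub_distrib, hr1, hs1]
    ring
  have hnn : ∀ a ∈ Finset.univ, 0 ≤ s a - r a + r a * Real.log (r a / s a) :=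
    fun a _ => gibbs_term_nonneg (hr a) (hs a)
  constructor
  · rw [← hsum]; exact Finset.sum_nonneg hnn
  · constructor
    · intro h
      rw [← hsum] at h
      have := (Finset.sum_eq_zero_iff_of_nonneg hnn).mp h
      exact fun a => gibbs_term_eq_zero (hr a) (hs a) (this a (Finset.mem_univ a))
    · intro h
      have : ∀ a ∈ Finset.univ, r a * Real.log (r a / s a) = 0 := by
        intro a _
        rw [h a, div_self (hs a).ne', Real.log_one, mul_zero]
      exact Finset.sum_eq_zero this

/-- Closed form of the constrained privileged expert: for full-support PMFs
`p, q` and `λ ≥ 0`, the normalized geometric mixture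
`r⋆(a) = p(a)^{1/(1+λ)} q(a)^{λ/(1+λ)} / Z` is a probability mass function and
is the unique minimizer over the probability simplex of the Lagrangian
`KL(r‖p) + λ·KL(r‖q)` of the constrained problem
`min KL(r‖p) s.t. KL(r‖q) ≤ δ`. -/
theorem constrained_expert_lagrangian_minimizer
    {𝒜 : Type*} [Fintype 𝒜] [Nonempty 𝒜]
    (p q : PMF 𝒜) (hp : ∀ a, p a ≠ 0) (hq : ∀ a, q a ≠ 0)
    (lam : ℝ) (hlam : 0 ≤ lam)
    (Z : ℝ)
    (hZ : Z = ∑ a, (p a).toReal ^ (1 / (1 + lam)) * (q a).toReal ^ (lam / (1 + lam)))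
    (rstar : 𝒜 → ℝ)
    (hrstar : ∀ a,
      rstar a = (p a).toReal ^ (1 / (1 + lam)) * (q a).toReal ^ (lam / (1 + lam)) / Z) :
    ((∀ a, 0 ≤ rstar a) ∧ ∑ a, rstar a = 1) ∧
    ∀ r : PMF 𝒜,
      (klFun (fun a => (r a).toReal) p + lam * klFun (fun a => (r a).toReal) q
          ≥ klFun rstar p + lam * klFun rstar q) ∧
      (klFun (fun a => (r a).toReal) p + lam * klFun (fun a => (r a).toReal) q
          = klFun rstar p + lam * klFun rstar q ↔ ∀ a, (r a).toReal = rstar a) := by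
  have h1l : (0:ℝ) < 1 + lam := by linarith
  have hP : ∀ a, 0 < (p a).toReal :=
    fun a => ENNReal.toReal_pos (hp a) (p.apply_ne_top a)
  have hQ : ∀ a, 0 < (q a).toReal :=
    fun a => ENNReal.toReal_pos (hq a) (q.apply_ne_top a)
  have hterm : ∀ a, 0 < (p a).toReal ^ (1 / (1 + lam)) * (q a).toReal ^ (lam / (1 + lam)) :=
    fun a => mul_pos (Real.rpow_pos_of_pos (hP a) _) (Real.rpow_pos_of_pos (hQ a) _)
  have hZpos : 0 < Z := by
    rw [hZ]
    exact Finset.sum_pos (fun a _ => hterm a) Finset.univ_nonempty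
  have hrpos : ∀ a, 0 < rstar a := fun a => by
    rw [hrstar a]; exact div_pos (hterm a) hZpos
  have hrsum : ∑ a, rstar a = 1 := by
    have : ∑ a, rstar a = (∑ a, (p a).toReal ^ (1 / (1 + lam)) *
        (q a).toReal ^ (lam / (1 + lam))) / Z := by
      rw [Finset.sum_div]
      exact Finset.sum_congr rfl fun a _ => hrstar a
    rw [this, ← hZ, div_self hZpos.ne']
  -- key identity
  have key : ∀ f : 𝒜 → ℝ, (∀ a, 0 ≤ f a) → (∑ a, f a = 1) →
      klFun f p + lam * klFun f q
        = (1 + lam) * (∑ a, f a * Real.log (f a / rstar a)) - (1 + lam) * Real.log Z := by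
    intro f hf hf1
    have hlogr : ∀ a, Real.log (rstar a)
        = (1 / (1 + lam)) * Real.log (p a).toReal
          + (lam / (1 + lam)) * Real.log (q a).toReal - Real.log Z := by
      intro a
      rw [hrstar a, Real.log_div (hterm a).ne' hZpos.ne',
        Real.log_mul (Real.rpow_pos_of_pos (hP a) _).ne' (Real.rpow_pos_of_pos (hQ a) _).ne',
        Real.log_rpow (hP a), Real.log_rpow (hQ a)]
    have pointwise : ∀ a, f a * Real.log (f a / (p a).toReal)
        + lam * (f a * Real.log (f a / (q a).toReal))
        = (1 + lam) * (f a * Real.log (f a / rstar a)) - (1 + lam) * Real.log Z * f a := by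
      intro a
      rcases eq_or_lt_of_le (hf a) with h0 | h0
      · simp [← h0]
      · rw [Real.log_div h0.ne' (hP a).ne', Real.log_div h0.ne' (hQ a).ne',
          Real.log_div h0.ne' (hrpos a).ne', hlogr a]
        field_simp
        ring
    calc klFun f p + lam * klFun f q
        = ∑ a, (f a * Real.log (f a / (p a).toReal)
            + lam * (f a * Real.log (f a / (q a).toReal))) := by
          rw [Finset.sum_add_distrib, ← Finset.mul_sum]; rfl
      _ = ∑ a, ((1 + lam) * (f a * Real.log (f a / rstar a))
            - (1 + lam) * Real.log Z * f a) :=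
          Finset.sum_congr rfl fun a _ => pointwise a
      _ = (1 + lam) * (∑ a, f a * Real.log (f a / rstar a)) - (1 + lam) * Real.log Z := by
          rw [Finset.sum_sub_distrib, ← Finset.mul_sum, ← Finset.mul_sum, hf1, mul_one]
  have hstar_eq : klFun rstar p + lam * klFun rstar q
      = - (1 + lam) * Real.log Z := by
    rw [key rstar (fun a => (hrpos a).le) hrsum]
    have : ∑ a, rstar a * Real.log (rstar a / rstar a) = 0 :=
      Finset.sum_eq_zero fun a _ => by
        rw [div_self (hrpos a).ne', Real.log_one, mul_zero]
    rw [this]; ring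
  refine ⟨⟨fun a => (hrpos a).le, hrsum⟩, fun r => ?_⟩
  set f : 𝒜 → ℝ := fun a => (r a).toReal with hf
  have hfnn : ∀ a, 0 ≤ f a := fun a => ENNReal.toReal_nonneg
  have hfsum : ∑ a, f a = 1 := by
    have h1 : ∑ a, r a = 1 := by
      rw [← tsum_eq_sum (L := SummationFilter.unconditional _) (s := Finset.univ) (fun a ha => absurd (Finset.mem_univ a) ha)]
      exact r.tsum_coe
    have h2 := congrArg ENNReal.toReal h1
    rwa [ENNReal.toReal_sum (fun a _ => r.apply_ne_top a)] at h2
  have hkey := key f hfnn hfsum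
  obtain ⟨hge, heq⟩ := gibbs_ineq f rstar hfnn hrpos hfsum hrsum
  constructor
  · rw [hkey, hstar_eq]
    nlinarith
  · rw [hkey, hstar_eq]
    constructor
    · intro h
      apply heq.mp
      nlinarith
    · intro h
      rw [heq.mpr h]; ring
end
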